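/- Let E be a real normed vector space, ⟦·,·⟧ : E × E → E a continuous bilinear antisymmetric map, and A : E → E a continuous linear map. Suppose u0, v, w ∈ E and real constants λ, α, ζ satisfy ⟦u0, A u0⟧ = 0, A v = α v, A w = α w, ⟦v, A u0⟧ = λ·α·w, ⟦w, A u0⟧ = −λ·α·v, ⟦u0, v⟧ = −ζ·w, and ⟦u0, w⟧ = ζ·v. Define U_R(t) = u0 + cos((λ−ζ)t)·v − sin((λ−ζ)t)·w and U_I(t) = sin((λ−ζ)t)·v + cos((λ−ζ)t)·w. Then U_I satisfies the linearized equation (d/dt)(A(U_I(t))) + ⟦U_R(t), A(U_I(t))⟧ + ⟦U_I(t), A(U_R(t))⟧ = 0 for all t ∈ ℝ. -/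

import Mathlib

/-- The linearized-solution part of Theorem 2.3 in abstract form.
With `U_R t = u0 + cos((λ-ζ)t) • v - sin((λ-ζ)t) • w` and
`U_I t = sin((λ-ζ)t) • v + cos((λ-ζ)t) • w`, the curve `U_I` satisfies the
linearized equation
`(d/dt)(A (U_I t)) + ⟦U_R t, A (U_I t)⟧ + ⟦U_I t, A (U_R t)⟧ = 0`. -/
theorem statement2 {E : Type*} [NormedAddCommGroup E] [NormedSpace ℝ E]
    (B : E →L[ℝ] E →L[ℝ] E) (hB : ∀ x y : E, B x y = -B y x)
    (A : E →L[ℝ] E) (u0 v w : E) (lam alpha zeta : ℝ)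
    (h1 : B u0 (A u0) = 0)
    (h2 : A v = alpha • v)
    (h3 : A w = alpha • w)
    (h4 : B v (A u0) = (lam * alpha) • w)
    (h5 : B w (A u0) = -((lam * alpha) • v))
    (h6 : B u0 v = -(zeta • w))
    (h7 : B u0 w = zeta • v) :
    ∀ t : ℝ,
      HasDerivAt
        (fun s : ℝ =>
          A (Real.sin ((lam - zeta) * s) • v + Real.cos ((lam - zeta) * s) • w))
        (-(B (u0 + Real.cos ((lam - zeta) * t) • v - Real.sin ((lam - zeta) * t) • w)
            (A (Real.sin ((lam - zeta) * t) • v + Real.cos ((lam - zeta) * t) • w)))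
          - B (Real.sin ((lam - zeta) * t) • v + Real.cos ((lam - zeta) * t) • w)
              (A (u0 + Real.cos ((lam - zeta) * t) • v - Real.sin ((lam - zeta) * t) • w))) t := by
  intro t
  have hBvv : B v v = 0 := by
    have h2' : (2 : ℝ) • B v v = 0 := by
      rw [two_smul]; nth_rewrite 2 [hB v v]; abel
    exact (smul_eq_zero.mp h2').resolve_left two_ne_zero
  have hBww : B w w = 0 := by
    have h2' : (2 : ℝ) • B w w = 0 := by
      rw [two_smul]; nth_rewrite 2 [hB w w]; abel
    exact (smul_eq_zero.mp h2').resolve_left two_ne_zero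
  have hBwv : B w v = -B v w := hB w v
  have hsin : HasDerivAt (fun s : ℝ => Real.sin ((lam - zeta) * s))
      ((lam - zeta) * Real.cos ((lam - zeta) * t)) t := by
    have := (Real.hasDerivAt_sin ((lam - zeta) * t)).comp t
      ((hasDerivAt_id t).const_mul (lam - zeta))
    simpa [Function.comp_def, mul_comm] using this
  have hcos : HasDerivAt (fun s : ℝ => Real.cos ((lam - zeta) * s))
      (-((lam - zeta) * Real.sin ((lam - zeta) * t))) t := by
    have := (Real.hasDerivAt_cos ((lam - zeta) * t)).comp t
      ((hasDerivAt_id t).const_mul (lam - zeta))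
    simpa [Function.comp_def, mul_comm] using this
  have hcurve : HasDerivAt
      (fun s : ℝ => Real.sin ((lam - zeta) * s) • v + Real.cos ((lam - zeta) * s) • w)
      (((lam - zeta) * Real.cos ((lam - zeta) * t)) • v +
        (-((lam - zeta) * Real.sin ((lam - zeta) * t))) • w) t :=
    (hsin.smul_const v).add (hcos.smul_const w)
  have hA := A.hasFDerivAt.comp_hasDerivAt t hcurve
  convert hA using 1
  · rfl
  set s := Real.sin ((lam - zeta) * t)
  set c := Real.cos ((lam - zeta) * t)
  have hsc : s ^ 2 + c ^ 2 = 1 := Real.sin_sq_add_cos_sq _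
  simp only [map_add, map_sub, map_smul, ContinuousLinearMap.add_apply,
    ContinuousLinearMap.sub_apply, ContinuousLinearMap.smul_apply, map_neg,
    ContinuousLinearMap.neg_apply, h1, h2, h3, h4, h5, h6, h7, hBvv, hBww, hBwv,
    smul_zero, smul_neg, smul_smul]
  match_scalars <;> nlinarith [hsc]
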